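/- (Strong duality.) Suppose 𝒴 is compact, the maps y ↦ p(y|1) and y ↦ p(y,1) are continuous on 𝒴, and there exists a Slater point γ* with Σ_ℓ γ*_ℓ = 0, Σ_ℓ γ*_ℓ p(z_ℓ) = 1, and p(y,1)'γ* > p(y|1) for all y ∈ 𝒴. If the primal optimal value UB(ȳ) is finite, then the dual optimal value equals the primal optimal value: ŨB(ȳ) = UB(ȳ). -/

import Mathlib

open MeasureTheory Filter Set Topology

private lemma aux_key {M : Type*} [AddCommMonoid M] {m n : ℕ} (hmn : m ≤ n) (F : Fin m → M) :
    (∑ j : Fin n, if h : (j : ℕ) < m then F ⟨j, h⟩ else 0) = ∑ i : Fin m, F i := by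
  rw [Fin.sum_univ_eq_sum_range (fun k => if h : k < m then F ⟨k, h⟩ else 0) n]
  rw [show (∑ i : Fin m, F i) = ∑ i : Fin m, (if h : (i:ℕ) < m then F ⟨i, h⟩ else 0) by
    apply Finset.sum_congr rfl; intro i _; simp]
  rw [Fin.sum_univ_eq_sum_range (fun k => if h : k < m then F ⟨k, h⟩ else (0:M)) m]
  rw [Finset.sum_subset (Finset.range_subset_range.2 hmn)]
  intro k _ hk
  rw [Finset.mem_range] at hk
  simp [hk]

private lemma aux_isCompact_convexHull {E : Type*} [NormedAddCommGroup E] [NormedSpace ℝ E]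
    [FiniteDimensional ℝ E] {s : Set E} (hs : IsCompact s) :
    IsCompact (convexHull ℝ s) := by
  rcases s.eq_empty_or_nonempty with rfl | ⟨s₀, hs₀⟩
  · simp
  · set n := Module.finrank ℝ E + 1 with hn
    set D : Set ((Fin n → ℝ) × (Fin n → E)) :=
      (stdSimplex ℝ (Fin n)) ×ˢ (Set.univ.pi fun _ => s) with hD
    have hDc : IsCompact D :=
      (isCompact_stdSimplex ℝ _).prod (isCompact_univ_pi fun _ => hs)
    have hf : Continuous (fun p : (Fin n → ℝ) × (Fin n → E) => ∑ i, p.1 i • p.2 i) := by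
      refine continuous_finset_sum _ fun i _ => ?_
      exact ((continuous_apply i).comp continuous_fst).smul
        ((continuous_apply i).comp continuous_snd)
    have himage : convexHull ℝ s = (fun p : (Fin n → ℝ) × (Fin n → E) => ∑ i, p.1 i • p.2 i) '' D := by
      apply Subset.antisymm
      · intro x hx
        rw [convexHull_eq_union] at hx
        simp only [mem_iUnion, exists_prop] at hx
        obtain ⟨t, hts, hai, hxt⟩ := hx
        have hcard : t.card ≤ n := by
          have := hai.card_le_finrank_succ
          rw [Fintype.card_coe] at this
          exact this.trans (by
            have := Submodule.finrank_le (vectorSpan ℝ (Set.range ((↑) : t → E)))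
            omega)
        rw [Finset.convexHull_eq] at hxt
        obtain ⟨w, hw0, hw1, hwx⟩ := hxt
        rw [Finset.centerMass_eq_of_sum_1 _ _ hw1] at hwx
        set σ := t.equivFin.symm with hσ
        classical
        set w' : Fin n → ℝ := fun j => if h : (j : ℕ) < t.card then w (σ ⟨j, h⟩) else 0 with hw'
        set z' : Fin n → E := fun j => if h : (j : ℕ) < t.card then (σ ⟨j, h⟩ : E) else s₀ with hz'
        refine ⟨(w', z'), ⟨⟨?_, ?_⟩, ?_⟩, ?_⟩
        · intro j
          by_cases h : (j : ℕ) < t.card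
          · simp only [hw', dif_pos h]; exact hw0 _ (σ ⟨j, h⟩).2
          · simp [hw', h]
        · have h1 : (∑ j : Fin n, w' j) = ∑ i : Fin t.card, w (σ i) := by
            simp only [hw']; exact aux_key hcard (fun i => w (σ i))
          rw [h1, Equiv.sum_comp σ (fun x : {x // x ∈ t} => w x), Finset.sum_coe_sort t w, hw1]
        · intro j _
          by_cases h : (j : ℕ) < t.card
          · simp only [hz', dif_pos h]; exact hts (σ ⟨j, h⟩).2
          · simpa [hz', h] using hs₀
        · show (∑ j : Fin n, w' j • z' j) = x
          have h2 : ∀ j : Fin n, w' j • z' j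
              = (if h : (j : ℕ) < t.card then w (σ ⟨j, h⟩) • (σ ⟨j, h⟩ : E) else 0) := by
            intro j
            by_cases h : (j : ℕ) < t.card <;> simp [hw', hz', h]
          rw [Finset.sum_congr rfl (fun j _ => h2 j),
            aux_key hcard (fun i : Fin t.card => w (σ i) • (σ i : E)),
            Equiv.sum_comp σ (fun x : {x // x ∈ t} => w x • (x : E)),
            Finset.sum_coe_sort t (fun x => w x • x)]
          simpa using hwx
      · rintro x ⟨⟨w, z⟩, ⟨hw, hz⟩, rfl⟩
        show (∑ i : Fin n, w i • z i) ∈ convexHull ℝ s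
        have : ∑ i : Fin n, w i • z i = Finset.univ.centerMass w z :=
          (Finset.centerMass_eq_of_sum_1 _ _ hw.2).symm
        rw [this]
        exact Finset.centerMass_mem_convexHull _ (fun i _ => hw.1 i) (by rw [hw.2]; norm_num)
          (fun i _ => hz i (Set.mem_univ i))
    rw [himage]
    exact hDc.image hf

private lemma aux_restrict_sum {α ι : Type*} [MeasurableSpace α] (t : Finset ι)
    (m : ι → Measure α) (s : Set α) :
    (∑ i ∈ t, m i).restrict s = ∑ i ∈ t, (m i).restrict s := by
  classical
  induction t using Finset.induction_on with
  | empty => simp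
  | insert a s h ih => simp [Finset.sum_insert h, Measure.restrict_add, ih]

private lemma aux_mul_lt_zero {c u : ℝ} (h : ∀ m : ℝ, m * c < u) : c = 0 := by
  by_contra hc
  have := h (u / c)
  rw [div_mul_cancel₀ _ hc] at this
  exact lt_irrefl _ this

private lemma aux_ray_le_zero {c u : ℝ} (hu : 0 < u) (h : ∀ r : ℝ, 0 ≤ r → r * c < u) : c ≤ 0 := by
  by_contra hc
  push_neg at hc
  have := h (u / c) (le_of_lt (div_pos hu hc))
  rw [div_mul_cancel₀ _ (ne_of_gt hc)] at this
  exact lt_irrefl _ this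
theorem strong_duality_semi_infinite_LP
    (L : ℕ) (Ycal : Set ℝ) (ybar : ℝ) (hybar : ybar ∈ Ycal)
    (pvec : ℝ → ℕ → Fin L → ℝ) (pcond : ℝ → ℕ → ℝ) (pz : Fin L → ℝ)
    -- 𝒴 compact, data continuous on 𝒴
    (hYcomp : IsCompact Ycal)
    (hcont1 : ContinuousOn (fun y => pcond y 1) Ycal)
    (hcontv : ∀ ℓ : Fin L, ContinuousOn (fun y => pvec y 1 ℓ) Ycal)
    -- Slater point: a strictly feasible γ*
    (γstar : Fin L → ℝ)
    (hγstar0 : (∑ ℓ, γstar ℓ) = 0) (hγstar1 : (∑ ℓ, γstar ℓ * pz ℓ) = 1)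
    (hslater : ∀ y ∈ Ycal, pcond y 1 < ∑ ℓ, pvec y 1 ℓ * γstar ℓ)
    -- the primal optimal value is finite (the primal value set is bounded below)
    (hfinite : BddBelow {v : ℝ | ∃ g : Fin L → ℝ,
      (∑ ℓ, g ℓ) = 0 ∧ (∑ ℓ, g ℓ * pz ℓ) = 1 ∧
      (∀ y ∈ Ycal, pcond y 1 ≤ ∑ ℓ, pvec y 1 ℓ * g ℓ) ∧
      v = -∑ ℓ, pvec ybar 0 ℓ * g ℓ}) :
    -- strong duality: the dual optimal value equals the primal optimal value
    sSup {v : ℝ | ∃ Λ' : Measure ℝ, IsFiniteMeasure Λ' ∧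
        ∃ l1 l2 : ℝ,
          (∀ ℓ, IntegrableOn (fun y => pvec y 1 ℓ) Ycal Λ') ∧
          IntegrableOn (fun y => pcond y 1) Ycal Λ' ∧
          (∀ ℓ : Fin L,
            l1 + l2 * pz ℓ - (∫ y in Ycal, pvec y 1 ℓ ∂Λ') - pvec ybar 0 ℓ = 0) ∧
          v = (∫ y in Ycal, pcond y 1 ∂Λ') - l2}
      = sInf {v : ℝ | ∃ g : Fin L → ℝ,
          (∑ ℓ, g ℓ) = 0 ∧ (∑ ℓ, g ℓ * pz ℓ) = 1 ∧
          (∀ y ∈ Ycal, pcond y 1 ≤ ∑ ℓ, pvec y 1 ℓ * g ℓ) ∧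
          v = -∑ ℓ, pvec ybar 0 ℓ * g ℓ} := by
  classical
  set P : Set ℝ := {v : ℝ | ∃ g : Fin L → ℝ,
      (∑ ℓ, g ℓ) = 0 ∧ (∑ ℓ, g ℓ * pz ℓ) = 1 ∧
      (∀ y ∈ Ycal, pcond y 1 ≤ ∑ ℓ, pvec y 1 ℓ * g ℓ) ∧
      v = -∑ ℓ, pvec ybar 0 ℓ * g ℓ} with hPdef
  set D : Set ℝ := {v : ℝ | ∃ Λ' : Measure ℝ, IsFiniteMeasure Λ' ∧
      ∃ l1 l2 : ℝ,
        (∀ ℓ, IntegrableOn (fun y => pvec y 1 ℓ) Ycal Λ') ∧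
        IntegrableOn (fun y => pcond y 1) Ycal Λ' ∧
        (∀ ℓ : Fin L,
          l1 + l2 * pz ℓ - (∫ y in Ycal, pvec y 1 ℓ ∂Λ') - pvec ybar 0 ℓ = 0) ∧
        v = (∫ y in Ycal, pcond y 1 ∂Λ') - l2} with hDdef
  have hYmeas : MeasurableSet Ycal := hYcomp.isClosed.measurableSet
  -- notation
  set bb : Fin L → ℝ := fun ℓ => pvec ybar 0 ℓ with hbb
  set gen1 : (Fin L → ℝ) × ℝ := ((fun _ => (1:ℝ)), (0:ℝ)) with hgen1
  set gen2 : (Fin L → ℝ) × ℝ := (pz, (-1:ℝ)) with hgen2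
  set V : Submodule ℝ ((Fin L → ℝ) × ℝ) := Submodule.span ℝ {gen1, gen2} with hV
  set S : Set ((Fin L → ℝ) × ℝ) :=
    ((fun y => ((fun ℓ => pvec y 1 ℓ), -(pcond y 1))) '' Ycal) ∪ {(0, 1)} with hS
  set cS : Set ((Fin L → ℝ) × ℝ) := convexHull ℝ S with hcS
  set T : Set ((Fin L → ℝ) × ℝ) :=
    {x | ∃ v ∈ (V : Set ((Fin L → ℝ) × ℝ)), ∃ r : ℝ, 0 ≤ r ∧ ∃ w ∈ cS, x = v - r • w} with hT
  set ψ : (Fin L → ℝ) × ℝ → ℝ := fun x => (∑ ℓ, x.1 ℓ * γstar ℓ) + x.2 with hψ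
  -- basic facts
  have hcS_ne : ((0:Fin L → ℝ), (1:ℝ)) ∈ cS :=
    subset_convexHull ℝ S (by simp [hS])
  have hψlin : IsLinearMap ℝ ψ := by
    constructor
    · intro x y
      simp only [hψ, Prod.fst_add, Prod.snd_add, Pi.add_apply, add_mul]
      rw [Finset.sum_add_distrib]; ring
    · intro c x
      simp only [hψ, Prod.smul_fst, Prod.smul_snd, Pi.smul_apply, smul_eq_mul,
        mul_assoc, ← Finset.mul_sum]
      ring
  have hψcont : Continuous ψ := by
    apply Continuous.add
    · exact continuous_finset_sum _ fun ℓ _ =>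
        (((continuous_apply ℓ).comp continuous_fst).mul continuous_const)
    · exact continuous_snd
  have hψV : ∀ v ∈ (V : Set ((Fin L → ℝ) × ℝ)), ψ v = 0 := by
    intro v hv
    rw [hV, SetLike.mem_coe, Submodule.mem_span_pair] at hv
    obtain ⟨m, n, rfl⟩ := hv
    rw [hψlin.map_add, hψlin.map_smul, hψlin.map_smul]
    have h1 : ψ gen1 = 0 := by
      simp only [hψ, hgen1]
      simpa using hγstar0
    have h2 : ψ gen2 = 0 := by
      simp only [hψ, hgen2]
      have : (∑ ℓ, pz ℓ * γstar ℓ) = 1 := by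
        rw [← hγstar1]; exact Finset.sum_congr rfl fun ℓ _ => mul_comm _ _
      rw [this]; ring
    rw [h1, h2]; simp
  have hS_comp : IsCompact S := by
    apply IsCompact.union
    · apply hYcomp.image_of_continuousOn
      apply ContinuousOn.prodMk
      · apply continuousOn_pi.2
        intro ℓ; exact hcontv ℓ
      · exact hcont1.neg
    · exact isCompact_singleton
  have hcS_comp : IsCompact cS := aux_isCompact_convexHull hS_comp
  -- positive lower bound for ψ on cS
  obtain ⟨δ, hδpos, hδ⟩ : ∃ δ : ℝ, 0 < δ ∧ ∀ w ∈ cS, δ ≤ ψ w := by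
    obtain ⟨x₀, hx₀S, hx₀min⟩ := hS_comp.exists_isMinOn ⟨((0:Fin L → ℝ), (1:ℝ)), by simp [hS]⟩
      hψcont.continuousOn
    refine ⟨ψ x₀, ?_, ?_⟩
    · rcases hx₀S with ⟨y, hy, rfl⟩ | hx₀S
      · have := hslater y hy
        simp only [hψ]
        linarith
      · simp only [mem_singleton_iff] at hx₀S
        rw [hx₀S]
        simp [hψ]
    · intro w hw
      have hconv : Convex ℝ {x : (Fin L → ℝ) × ℝ | ψ x₀ ≤ ψ x} :=
        convex_halfSpace_ge hψlin _
      exact convexHull_min (fun x hx => isMinOn_iff.mp hx₀min x hx) hconv hw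
  -- T is convex
  have hTconv : Convex ℝ T := by
    rintro x hx y hy a b ha hb hab
    obtain ⟨vx, hvx, rx, hrx, wx, hwx, rfl⟩ := hx
    obtain ⟨vy, hvy, ry, hry, wy, hwy, rfl⟩ := hy
    set ρ : ℝ := a * rx + b * ry with hρdef
    have hρ : 0 ≤ ρ := by positivity
    rcases eq_or_lt_of_le hρ with hρ0 | hρpos
    · have h1 : a * rx = 0 ∧ b * ry = 0 := by
        constructor <;> nlinarith [mul_nonneg ha hrx, mul_nonneg hb hry]
      refine ⟨a • vx + b • vy, V.add_mem (V.smul_mem _ hvx) (V.smul_mem _ hvy),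
        0, le_refl 0, ((0:Fin L → ℝ), (1:ℝ)), hcS_ne, ?_⟩
      rw [smul_sub, smul_sub, smul_smul, smul_smul, h1.1, h1.2]
      simp only [zero_smul, sub_zero]
    · have hρne : ρ ≠ 0 := ne_of_gt hρpos
      refine ⟨a • vx + b • vy, V.add_mem (V.smul_mem _ hvx) (V.smul_mem _ hvy),
        ρ, le_of_lt hρpos, (a * rx / ρ) • wx + (b * ry / ρ) • wy, ?_, ?_⟩
      · exact (convex_convexHull ℝ S) hwx hwy (by positivity) (by positivity)
          (by field_simp; exact hρdef.symm)
      · rw [smul_add, smul_smul, smul_smul, mul_comm ρ _, mul_comm ρ _,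
          div_mul_cancel₀ _ hρne, div_mul_cancel₀ _ hρne,
          smul_sub, smul_sub, smul_smul, smul_smul]
        abel
  -- T is closed
  have hTclosed : IsClosed T := by
    apply IsSeqClosed.isClosed
    intro x p hx hxp
    choose v hvV r hr w hwS hxe using hx
    have hψx : ∀ n, ψ (x n) = - (r n * ψ (w n)) := by
      intro n
      rw [hxe n, hψlin.map_sub, hψV _ (hvV n), hψlin.map_smul]
      simp
    have hten : Tendsto (fun n => ψ (x n)) atTop (𝓝 (ψ p)) :=
      (hψcont.tendsto p).comp hxp
    have hten2 : Tendsto (fun n => r n * ψ (w n)) atTop (𝓝 (-ψ p)) := by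
      have := hten.neg
      simp only [hψx, neg_neg] at this
      exact this
    obtain ⟨C, hC⟩ : BddAbove (Set.range fun n => r n * ψ (w n)) := hten2.bddAbove_range
    have hrC : ∀ n, r n ≤ C / δ := by
      intro n
      have h1 : r n * δ ≤ r n * ψ (w n) :=
        mul_le_mul_of_nonneg_left (hδ _ (hwS n)) (hr n)
      have h2 : r n * ψ (w n) ≤ C := hC ⟨n, rfl⟩
      rw [le_div_iff₀ hδpos]
      linarith
    have hK : IsCompact ((Icc (0:ℝ) (C/δ)) ×ˢ cS) := isCompact_Icc.prod hcS_comp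
    obtain ⟨⟨rl, wl⟩, hmem, φ, hφ, hsub⟩ :=
      hK.tendsto_subseq (x := fun n => (r n, w n)) (fun n => ⟨⟨hr n, hrC n⟩, hwS n⟩)
    have hrt : Tendsto (fun k => r (φ k)) atTop (𝓝 rl) :=
      (continuous_fst.tendsto _).comp hsub
    have hwt : Tendsto (fun k => w (φ k)) atTop (𝓝 wl) :=
      (continuous_snd.tendsto _).comp hsub
    have hveq : ∀ k, v (φ k) = x (φ k) + r (φ k) • w (φ k) := by
      intro k
      rw [hxe (φ k)]
      abel
    have hvt : Tendsto (fun k => v (φ k)) atTop (𝓝 (p + rl • wl)) := by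
      rw [funext hveq]
      exact (hxp.comp hφ.tendsto_atTop).add (hrt.smul hwt)
    have hpv : p + rl • wl ∈ V :=
      (Submodule.closed_of_finiteDimensional V).mem_of_tendsto hvt
        (Filter.Eventually.of_forall fun k => hvV (φ k))
    exact ⟨p + rl • wl, hpv, rl, hmem.1.1, wl, hmem.2, by abel⟩
  -- primal set nonempty
  have hPne : P.Nonempty := by
    refine ⟨-∑ ℓ, pvec ybar 0 ℓ * γstar ℓ, γstar, hγstar0, hγstar1,
      fun y hy => le_of_lt (hslater y hy), rfl⟩
  set s : ℝ := sInf P with hs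
  -- weak duality
  have hweak : ∀ d ∈ D, ∀ v ∈ P, d ≤ v := by
    intro d hd v hv
    rw [hDdef] at hd
    rw [hPdef] at hv
    obtain ⟨Λ', hΛfin, l1, l2, hintv, hintc, hconstr, rfl⟩ := hd
    obtain ⟨g, hg0, hg1, hgfeas, rfl⟩ := hv
    have hFint : IntegrableOn (fun y => ∑ ℓ, pvec y 1 ℓ * g ℓ) Ycal Λ' := by
      apply integrable_finset_sum
      intro ℓ _
      exact (hintv ℓ).mul_const (g ℓ)
    have h1 : ∫ y in Ycal, pcond y 1 ∂Λ' ≤ ∫ y in Ycal, (∑ ℓ, pvec y 1 ℓ * g ℓ) ∂Λ' :=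
      setIntegral_mono_on hintc hFint hYmeas hgfeas
    have h2 : ∫ y in Ycal, (∑ ℓ, pvec y 1 ℓ * g ℓ) ∂Λ'
        = ∑ ℓ, (∫ y in Ycal, pvec y 1 ℓ ∂Λ') * g ℓ := by
      rw [integral_finset_sum _ (fun ℓ _ => (hintv ℓ).mul_const (g ℓ))]
      exact Finset.sum_congr rfl fun ℓ _ => integral_mul_const _ _
    have h3 : ∀ ℓ, (∫ y in Ycal, pvec y 1 ℓ ∂Λ') = l1 + l2 * pz ℓ - pvec ybar 0 ℓ := by
      intro ℓ; have := hconstr ℓ; linarith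
    have h4 : ∑ ℓ, (l1 + l2 * pz ℓ - pvec ybar 0 ℓ) * g ℓ
        = l1 * (∑ ℓ, g ℓ) + l2 * (∑ ℓ, g ℓ * pz ℓ) - ∑ ℓ, pvec ybar 0 ℓ * g ℓ := by
      rw [show (∑ ℓ, (l1 + l2 * pz ℓ - pvec ybar 0 ℓ) * g ℓ)
          = ∑ ℓ, (l1 * g ℓ + l2 * (g ℓ * pz ℓ) - pvec ybar 0 ℓ * g ℓ) from
        Finset.sum_congr rfl fun ℓ _ => by ring]
      rw [Finset.sum_sub_distrib, Finset.sum_add_distrib, ← Finset.mul_sum, ← Finset.mul_sum]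
    rw [h2] at h1
    simp only [h3] at h1
    rw [h4, hg0, hg1] at h1
    linarith
  -- claim A : membership in T gives dual points
  have hclaimA : ∀ t : ℝ, ((bb, t) : (Fin L → ℝ) × ℝ) ∈ T → ∃ d ∈ D, t ≤ d := by
    intro t ht
    obtain ⟨v, hvV, r, hrpos, w, hwcS, heq⟩ := ht
    rw [hV, SetLike.mem_coe, Submodule.mem_span_pair] at hvV
    obtain ⟨l1, l2, rfl⟩ := hvV
    rw [hcS, convexHull_eq] at hwcS
    obtain ⟨ι, tt, wt, zt, hwt0, hwt1, hztS, hcm⟩ := hwcS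
    rw [Finset.centerMass_eq_of_sum_1 _ _ hwt1] at hcm
    set cond : ι → Prop := fun i => ∃ y ∈ Ycal,
      (((fun ℓ => pvec y 1 ℓ), -(pcond y 1)) : (Fin L → ℝ) × ℝ) = zt i with hconddef
    set Y : ι → ℝ := fun i => if h : cond i then h.choose else ybar with hYdef
    set μ : ι → ℝ := fun i => if cond i then r * wt i else 0 with hμdef
    have hYmem : ∀ i, Y i ∈ Ycal := by
      intro i
      by_cases h : cond i
      · simp only [hYdef, dif_pos h]; exact h.choose_spec.1
      · simp only [hYdef, dif_neg h]; exact hybar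
    have hμ0 : ∀ i ∈ tt, 0 ≤ μ i := by
      intro i hi
      by_cases h : cond i
      · simp only [hμdef, if_pos h]; exact mul_nonneg hrpos (hwt0 i hi)
      · simp [hμdef, h]
    -- key coordinatewise description of the atoms
    have hkey : ∀ i ∈ tt,
        (((r * wt i) • zt i).1 = fun ℓ => μ i * pvec (Y i) 1 ℓ)
        ∧ (-(μ i * pcond (Y i) 1) ≤ ((r * wt i) • zt i).2) := by
      intro i hi
      by_cases h : cond i
      · have hμi : μ i = r * wt i := if_pos h
        have hYi : (((fun ℓ => pvec (Y i) 1 ℓ), -(pcond (Y i) 1)) : (Fin L → ℝ) × ℝ) = zt i := by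
          simp only [hYdef, dif_pos h]
          exact h.choose_spec.2
        constructor
        · rw [← hYi]
          funext ℓ
          simp [hμi, mul_comm]
        · rw [← hYi]
          simp only [Prod.smul_snd, smul_eq_mul, hμi]
          ring_nf
          exact le_refl _
      · have hz1 : zt i = ((0 : Fin L → ℝ), (1:ℝ)) := by
          rcases hztS i hi with hmem | hmem
          · exact absurd (by exact hmem) h
          · simpa using hmem
        have hμi : μ i = 0 := if_neg h
        rw [hz1]
        constructor
        · funext ℓ
          simp [hμi]
        · simp only [Prod.smul_snd, smul_eq_mul, mul_one, hμi, zero_mul, neg_zero]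
          exact mul_nonneg hrpos (hwt0 i hi)
    -- the measure
    set Λm : Measure ℝ := ∑ i ∈ tt, (ENNReal.ofReal (μ i)) • Measure.dirac (Y i) with hΛm
    have hΛfin : IsFiniteMeasure Λm := by
      constructor
      rw [hΛm, Measure.coe_finset_sum, Finset.sum_apply]
      refine ENNReal.sum_lt_top.2 fun i _ => ?_
      rw [Measure.smul_apply, smul_eq_mul]
      exact ENNReal.mul_lt_top ENNReal.ofReal_lt_top (by simp)
    have hint : ∀ f : ℝ → ℝ, ContinuousOn f Ycal →
        IntegrableOn f Ycal Λm ∧ (∫ y in Ycal, f y ∂Λm) = ∑ i ∈ tt, μ i * f (Y i) := by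
      intro f hf
      have hIR : ∀ i ∈ tt,
          Integrable f (((ENNReal.ofReal (μ i)) • Measure.dirac (Y i)).restrict Ycal) := by
        intro i _
        haveI : IsFiniteMeasure ((ENNReal.ofReal (μ i)) • Measure.dirac (Y i)) := by
          constructor
          rw [Measure.smul_apply, smul_eq_mul]
          exact ENNReal.mul_lt_top ENNReal.ofReal_lt_top (by simp)
        exact hf.integrableOn_compact hYcomp
      have hrestrict : Λm.restrict Ycal
          = ∑ i ∈ tt, ((ENNReal.ofReal (μ i)) • Measure.dirac (Y i)).restrict Ycal := by
        rw [hΛm]; exact aux_restrict_sum tt _ Ycal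
      constructor
      · show Integrable f (Λm.restrict Ycal)
        rw [hrestrict]
        exact integrable_finset_sum_measure.2 hIR
      · show ∫ y, f y ∂(Λm.restrict Ycal) = _
        rw [hrestrict, integral_finset_sum_measure hIR]
        refine Finset.sum_congr rfl fun i hi => ?_
        rw [Measure.restrict_smul, integral_smul_measure,
          MeasureTheory.restrict_dirac' hYmeas, if_pos (hYmem i), integral_dirac,
          ENNReal.toReal_ofReal (hμ0 i hi), smul_eq_mul]
    -- coordinates of the equation
    have hrw : r • w = ∑ i ∈ tt, (r * wt i) • zt i := by
      rw [← hcm, Finset.smul_sum]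
      exact Finset.sum_congr rfl fun i _ => (smul_smul r (wt i) (zt i))
    have hsm1 : ∀ ℓ, (r • w).1 ℓ = ∑ i ∈ tt, μ i * pvec (Y i) 1 ℓ := by
      intro ℓ
      rw [hrw, Prod.fst_sum, Finset.sum_apply]
      exact Finset.sum_congr rfl fun i hi => congrFun (hkey i hi).1 ℓ
    have heq1 : ∀ ℓ, bb ℓ = l1 + l2 * pz ℓ - ∑ i ∈ tt, μ i * pvec (Y i) 1 ℓ := by
      intro ℓ
      have h1 : bb ℓ = (l1 * 1 + l2 * pz ℓ) - (r • w).1 ℓ :=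
        congrFun (congrArg Prod.fst heq) ℓ
      rw [hsm1 ℓ] at h1
      rw [h1]; ring
    have heq2 : t ≤ -l2 + ∑ i ∈ tt, μ i * pcond (Y i) 1 := by
      have hsm2 : (r • w).2 = ∑ i ∈ tt, ((r * wt i) • zt i).2 := by
        rw [hrw, Prod.snd_sum]
      have hsumle : -(∑ i ∈ tt, μ i * pcond (Y i) 1) ≤ (r • w).2 := by
        rw [hsm2, ← Finset.sum_neg_distrib]
        exact Finset.sum_le_sum fun i hi => (hkey i hi).2
      have h2 : t = (l1 * 0 + l2 * (-1)) - (r • w).2 := congrArg Prod.snd heq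
      rw [h2]
      linarith [hsumle]
    -- build the dual point
    obtain ⟨hintc', hintceq⟩ := hint _ hcont1
    have hintv' : ∀ ℓ : Fin L, IntegrableOn (fun y => pvec y 1 ℓ) Ycal Λm ∧
        (∫ y in Ycal, pvec y 1 ℓ ∂Λm) = ∑ i ∈ tt, μ i * pvec (Y i) 1 ℓ :=
      fun ℓ => hint _ (hcontv ℓ)
    refine ⟨(∫ y in Ycal, pcond y 1 ∂Λm) - l2, ?_, ?_⟩
    · rw [hDdef]
      refine ⟨Λm, hΛfin, l1, l2, fun ℓ => (hintv' ℓ).1, hintc', fun ℓ => ?_, rfl⟩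
      rw [(hintv' ℓ).2]
      have := heq1 ℓ
      simp only [hbb] at this
      linarith
    · rw [hintceq]
      linarith [heq2]
  -- claim B : separation
  have hclaimB : ∀ t : ℝ, t < s → ((bb, t) : (Fin L → ℝ) × ℝ) ∈ T := by
    intro t hts
    by_contra hnot
    obtain ⟨f, u, hfT, hfx⟩ := geometric_hahn_banach_closed_point hTconv hTclosed hnot
    set γ : Fin L → ℝ := fun ℓ => f ((Pi.single ℓ 1 : Fin L → ℝ), (0:ℝ)) with hγdef
    set β : ℝ := f ((0:Fin L → ℝ), (1:ℝ)) with hβdef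
    have hdecomp : ∀ x : (Fin L → ℝ) × ℝ, f x = (∑ ℓ, x.1 ℓ * γ ℓ) + x.2 * β := by
      intro x
      have hx : x = (∑ ℓ, x.1 ℓ • ((Pi.single ℓ 1 : Fin L → ℝ), (0:ℝ)))
          + x.2 • ((0:Fin L → ℝ), (1:ℝ)) := by
        apply Prod.ext
        · simp only [Prod.fst_add, Prod.fst_sum, Prod.smul_fst, Prod.smul_snd, smul_zero,
            Prod.snd_sum, smul_eq_mul]
          funext j
          simp [Pi.single_apply, Finset.sum_ite_eq, mul_comm]
        · simp only [Prod.snd_add, Prod.snd_sum, Prod.smul_snd, smul_zero, smul_eq_mul]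
          simp
      conv_lhs => rw [hx]
      rw [map_add, map_sum]
      simp only [_root_.map_smul, smul_eq_mul]
      rfl
    have h0T : (0 : (Fin L → ℝ) × ℝ) ∈ T :=
      ⟨0, V.zero_mem, 0, le_refl 0, ((0:Fin L → ℝ),(1:ℝ)), hcS_ne, by simp⟩
    have hu0 : 0 < u := by
      have := hfT 0 h0T
      simpa using this
    have hfgen : ∀ z ∈ (V : Set ((Fin L → ℝ) × ℝ)), f z = 0 := by
      intro z hz
      apply aux_mul_lt_zero (u := u)
      intro m
      have hmT : m • z ∈ T :=
        ⟨m • z, V.smul_mem m hz, 0, le_rfl, ((0:Fin L → ℝ),(1:ℝ)), hcS_ne, by simp⟩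
      have := hfT _ hmT
      rwa [_root_.map_smul, smul_eq_mul] at this
    have hgen1V : gen1 ∈ (V : Set ((Fin L → ℝ) × ℝ)) :=
      Submodule.subset_span (by simp)
    have hgen2V : gen2 ∈ (V : Set ((Fin L → ℝ) × ℝ)) :=
      Submodule.subset_span (by simp)
    have hγsum : ∑ ℓ, γ ℓ = 0 := by
      have := hfgen gen1 hgen1V
      rw [hdecomp] at this
      simpa [hgen1] using this
    have hγpz : ∑ ℓ, pz ℓ * γ ℓ = β := by
      have := hfgen gen2 hgen2V
      rw [hdecomp] at this
      simp only [hgen2] at this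
      linarith
    have hray : ∀ w ∈ cS, 0 ≤ f w := by
      intro w hw
      have h : ∀ r : ℝ, 0 ≤ r → r * (f (-w)) < u := by
        intro r hr
        have hmT : -(r • w) ∈ T := ⟨0, V.zero_mem, r, hr, w, hw, by simp⟩
        have := hfT _ hmT
        rwa [show -(r • w) = r • (-w) by rw [smul_neg], _root_.map_smul, smul_eq_mul] at this
      have h2 := aux_ray_le_zero hu0 h
      rw [map_neg] at h2
      linarith
    have hβ0 : 0 ≤ β := hray _ hcS_ne
    have hineq : ∀ y ∈ Ycal, pcond y 1 * β ≤ ∑ ℓ, pvec y 1 ℓ * γ ℓ := by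
      intro y hy
      have hmem : (((fun ℓ => pvec y 1 ℓ), -(pcond y 1)) : (Fin L → ℝ) × ℝ) ∈ cS :=
        subset_convexHull ℝ S (Or.inl ⟨y, hy, rfl⟩)
      have := hray _ hmem
      rw [hdecomp] at this
      simp only at this
      linarith
    have hxval : u < (∑ ℓ, pvec ybar 0 ℓ * γ ℓ) + t * β := by
      have := hfx
      rw [hdecomp] at this
      simpa [hbb] using this
    rcases eq_or_lt_of_le hβ0 with hβ | hβ
    · -- β = 0 : contradiction with boundedness below
      obtain ⟨lb, hlb⟩ := hfinite
      have hB : 0 < ∑ ℓ, pvec ybar 0 ℓ * γ ℓ := by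
        rw [← hβ] at hxval
        simpa using lt_trans hu0 hxval
      set B : ℝ := ∑ ℓ, pvec ybar 0 ℓ * γ ℓ with hBdef
      set A : ℝ := -∑ ℓ, pvec ybar 0 ℓ * γstar ℓ with hAdef
      set M : ℝ := max 0 ((A - lb) / B + 1) with hMdef
      have hM0 : 0 ≤ M := le_max_left _ _
      have hMgt : (A - lb)/B < M := lt_of_lt_of_le (lt_add_one _) (le_max_right _ _)
      have hmemP : (-∑ ℓ, pvec ybar 0 ℓ * (γstar ℓ + M * γ ℓ)) ∈ P := by
        rw [hPdef]
        refine ⟨fun ℓ => γstar ℓ + M * γ ℓ, ?_, ?_, ?_, rfl⟩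
        · show (∑ ℓ, (γstar ℓ + M * γ ℓ)) = 0
          rw [Finset.sum_add_distrib, hγstar0, ← Finset.mul_sum, hγsum]
          ring
        · show (∑ ℓ, (γstar ℓ + M * γ ℓ) * pz ℓ) = 1
          rw [show (∑ ℓ, (γstar ℓ + M * γ ℓ) * pz ℓ)
              = (∑ ℓ, γstar ℓ * pz ℓ) + M * ∑ ℓ, pz ℓ * γ ℓ from by
            rw [Finset.mul_sum, ← Finset.sum_add_distrib]
            exact Finset.sum_congr rfl fun ℓ _ => by ring]
          rw [hγstar1, hγpz, ← hβ]
          ring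
        · intro y hy
          have h1 := hslater y hy
          have h2 := hineq y hy
          rw [← hβ, mul_zero] at h2
          have h3 : (∑ ℓ, pvec y 1 ℓ * (γstar ℓ + M * γ ℓ))
              = (∑ ℓ, pvec y 1 ℓ * γstar ℓ) + M * ∑ ℓ, pvec y 1 ℓ * γ ℓ := by
            rw [Finset.mul_sum, ← Finset.sum_add_distrib]
            exact Finset.sum_congr rfl fun ℓ _ => by ring
          show pcond y 1 ≤ ∑ ℓ, pvec y 1 ℓ * (γstar ℓ + M * γ ℓ)
          rw [h3]
          have h4 : 0 ≤ M * ∑ ℓ, pvec y 1 ℓ * γ ℓ := mul_nonneg hM0 h2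
          linarith
      have hval : (-∑ ℓ, pvec ybar 0 ℓ * (γstar ℓ + M * γ ℓ)) = A - M * B := by
        rw [hAdef, hBdef, Finset.mul_sum,
          show (∑ ℓ, pvec ybar 0 ℓ * (γstar ℓ + M * γ ℓ))
            = (∑ ℓ, pvec ybar 0 ℓ * γstar ℓ) + ∑ ℓ, M * (pvec ybar 0 ℓ * γ ℓ) from by
          rw [← Finset.sum_add_distrib]
          exact Finset.sum_congr rfl fun ℓ _ => by ring]
        rw [← Finset.mul_sum]
        ring
      have hlb2 := hlb hmemP
      rw [hval] at hlb2
      have : A - lb < M * B := (div_lt_iff₀ hB).1 hMgt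
      linarith
    · -- β > 0 : build a primal point better than the infimum
      set g : Fin L → ℝ := fun ℓ => γ ℓ / β with hgdef
      have hmemP : (-∑ ℓ, pvec ybar 0 ℓ * g ℓ) ∈ P := by
        rw [hPdef]
        refine ⟨g, ?_, ?_, ?_, rfl⟩
        · simp only [hgdef]
          rw [← Finset.sum_div, hγsum, zero_div]
        · rw [show (∑ ℓ, g ℓ * pz ℓ) = (∑ ℓ, pz ℓ * γ ℓ) / β from by
            rw [Finset.sum_div]
            exact Finset.sum_congr rfl fun ℓ _ => by
              simp only [hgdef]; ring]
          rw [hγpz, div_self (ne_of_gt hβ)]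
        · intro y hy
          have h2 := hineq y hy
          have h5 : (∑ ℓ, pvec y 1 ℓ * g ℓ) = (∑ ℓ, pvec y 1 ℓ * γ ℓ) / β := by
            rw [Finset.sum_div]
            exact Finset.sum_congr rfl fun ℓ _ => by
              simp only [hgdef]; ring
          rw [h5, le_div_iff₀ hβ]
          linarith
      have hsle : s ≤ -∑ ℓ, pvec ybar 0 ℓ * g ℓ := csInf_le hfinite hmemP
      have hval : (-∑ ℓ, pvec ybar 0 ℓ * g ℓ) = (-∑ ℓ, pvec ybar 0 ℓ * γ ℓ) / β := by
        rw [neg_div, Finset.sum_div]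
        congr 1
        exact Finset.sum_congr rfl fun ℓ _ => by
          simp only [hgdef]; ring
      have htb : -(∑ ℓ, pvec ybar 0 ℓ * γ ℓ) < t * β := by linarith
      have : (-∑ ℓ, pvec ybar 0 ℓ * γ ℓ) / β < t := by
        rw [div_lt_iff₀ hβ]
        linarith
      rw [hval] at hsle
      linarith
  -- assemble
  obtain ⟨d₀, hd₀D, _⟩ := hclaimA (s - 1) (hclaimB _ (by linarith))
  have hDne : D.Nonempty := ⟨d₀, hd₀D⟩
  have hDbdd : BddAbove D := by
    obtain ⟨v₀, hv₀⟩ := hPne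
    exact ⟨v₀, fun d hd => hweak d hd v₀ hv₀⟩
  have hsup_le : sSup D ≤ s :=
    csSup_le hDne fun d hd => le_csInf hPne fun v hv => hweak d hd v hv
  have hle : s ≤ sSup D := by
    by_contra hcon
    push_neg at hcon
    obtain ⟨d, hdD, htd⟩ := hclaimA ((sSup D + s) / 2) (hclaimB _ (by linarith))
    have : d ≤ sSup D := le_csSup hDbdd hdD
    linarith
  exact le_antisymm hsup_le hle
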